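/- Let n > p ≥ 1 be integers and fix 0 < y_1 < ⋯ < y_p. Then ∫ over the region {0 ≤ x_1 ≤ y_1 ≤ x_2 ≤ y_2 ≤ ⋯ ≤ x_p ≤ y_p} of [Δ(x) ∏_{i=1}^p x_i^{n−1−p}] / [Δ(y) ∏_{i=1}^p y_i^{n−p}] dx equals (n−p−1)!/(n−1)!. -/

import Mathlib

open MeasureTheory


/-- lower endpoints of the box -/
def wdaLo {p : ℕ} (y : Fin p → ℝ) (j : Fin p) : ℝ :=
  if h : (j : ℕ) = 0 then 0 else y ⟨(j : ℕ) - 1, lt_of_le_of_lt (Nat.pred_le _) j.2⟩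

lemma wda_indicator_pi_prod {p : ℕ} (s : Fin p → Set ℝ) (f : Fin p → ℝ → ℝ) (x : Fin p → ℝ) :
    (Set.pi Set.univ s).indicator (fun x => ∏ j, f j (x j)) x
      = ∏ j, (s j).indicator (f j) (x j) := by
  by_cases hx : x ∈ Set.pi Set.univ s
  · rw [Set.indicator_of_mem hx]
    exact Finset.prod_congr rfl fun j _ =>
      (Set.indicator_of_mem (hx j (Set.mem_univ j)) _).symm
  · rw [Set.indicator_of_notMem hx]
    rw [Set.mem_univ_pi] at hx
    push_neg at hx
    obtain ⟨j, hj⟩ := hx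
    exact (Finset.prod_eq_zero (Finset.mem_univ j)
      (Set.indicator_of_notMem hj _)).symm

lemma wda_integral_Icc_pow (a b : ℝ) (hab : a ≤ b) (k : ℕ) :
    ∫ t in Set.Icc a b, t ^ k = (b ^ (k + 1) - a ^ (k + 1)) / ((k : ℝ) + 1) := by
  rw [MeasureTheory.integral_Icc_eq_integral_Ioc, ← intervalIntegral.integral_of_le hab,
    integral_pow]

lemma wda_box_monomial {p : ℕ} (a b : Fin p → ℝ) (hab : ∀ j, a j ≤ b j) (e : Fin p → ℕ) :
    ∫ x in Set.pi Set.univ (fun j => Set.Icc (a j) (b j)), ∏ j, (x j) ^ (e j)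
      = ∏ j, ((b j) ^ (e j + 1) - (a j) ^ (e j + 1)) / ((e j : ℝ) + 1) := by
  rw [← MeasureTheory.integral_indicator (MeasurableSet.univ_pi fun j => measurableSet_Icc)]
  have : (fun x : Fin p → ℝ => (Set.pi Set.univ (fun j => Set.Icc (a j) (b j))).indicator
      (fun x => ∏ j, (x j) ^ (e j)) x)
      = fun x : Fin p → ℝ => ∏ j, (Set.Icc (a j) (b j)).indicator (fun t => t ^ (e j)) (x j) := by
    funext x
    exact wda_indicator_pi_prod _ _ x
  rw [this, MeasureTheory.volume_pi, MeasureTheory.integral_fintype_prod_eq_prod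
    (f := fun j => (Set.Icc (a j) (b j)).indicator (fun t => t ^ (e j)))]
  refine Finset.prod_congr rfl fun j _ => ?_
  rw [MeasureTheory.integral_indicator measurableSet_Icc, wda_integral_Icc_pow _ _ (hab j)]



lemma wda_det_x {p m : ℕ} (x : Fin p → ℝ) :
    Matrix.det (Matrix.of fun i j : Fin p => x i ^ ((j : ℕ) + m))
      = (∏ i : Fin p, ∏ j ∈ Finset.Ioi i, (x j - x i)) * ∏ i : Fin p, x i ^ m := by
  have h : (Matrix.of fun i j : Fin p => x i ^ ((j : ℕ) + m))
      = Matrix.of fun i j : Fin p => x i ^ m * Matrix.vandermonde x i j := by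
    ext i j
    simp [Matrix.vandermonde, pow_add, mul_comm]
  rw [h, Matrix.det_mul_column, Matrix.det_vandermonde, mul_comm]

lemma wda_det_y {p m : ℕ} (y : Fin p → ℝ) :
    Matrix.det (Matrix.of fun i j : Fin p => y j ^ ((i : ℕ) + m + 1))
      = (∏ i : Fin p, ∏ j ∈ Finset.Ioi i, (y j - y i)) * ∏ i : Fin p, y i ^ (m + 1) := by
  have h : (Matrix.of fun i j : Fin p => y j ^ ((i : ℕ) + m + 1))
      = (Matrix.of fun i j : Fin p => y i ^ (m + 1) * Matrix.vandermonde y i j).transpose := by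
    ext i j
    simp [Matrix.vandermonde, Matrix.transpose_apply, pow_add]
    ring
  rw [h, Matrix.det_transpose, Matrix.det_mul_column, Matrix.det_vandermonde, mul_comm]

lemma wda_det_telescope {p : ℕ} (D : Matrix (Fin p) (Fin p) ℝ) :
    Matrix.det (fun i j : Fin p =>
        D i j - (if h : (j : ℕ) = 0 then 0
          else D i ⟨(j : ℕ) - 1, lt_of_le_of_lt (Nat.pred_le _) j.2⟩))
      = D.det := by
  set E : Matrix (Fin p) (Fin p) ℝ :=
    Matrix.of fun k j : Fin p => if k = j then 1 else if (k : ℕ) + 1 = (j : ℕ) then -1 else 0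
    with hEdef
  have hE : E.BlockTriangular id := by
    intro i j hij
    simp only [id] at hij
    have h1 : ¬ i = j := by intro h; subst h; exact lt_irrefl _ hij
    have h2 : ¬ ((i : ℕ) + 1 = (j : ℕ)) := by omega
    simp [hEdef, h1, h2]
  have hdetE : E.det = 1 := by
    rw [Matrix.det_of_upperTriangular hE]
    simp [hEdef]
  have hDE : ((fun i j : Fin p =>
      D i j - (if h : (j : ℕ) = 0 then 0
        else D i ⟨(j : ℕ) - 1, lt_of_le_of_lt (Nat.pred_le _) j.2⟩)) : Matrix (Fin p) (Fin p) ℝ) = D * E := by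
    ext i j
    rw [Matrix.mul_apply]
    show D i j - _ = _
    by_cases hj : (j : ℕ) = 0
    · rw [dif_pos hj]
      rw [Finset.sum_eq_single j]
      · simp [hEdef]
      · intro k _ hk
        have h2 : ¬ ((k : ℕ) + 1 = (j : ℕ)) := by omega
        simp [hEdef, hk, h2]
      · intro h; exact absurd (Finset.mem_univ j) h
    · rw [dif_neg hj]
      set jp : Fin p := ⟨(j : ℕ) - 1, lt_of_le_of_lt (Nat.pred_le _) j.2⟩ with hjp
      have step : ∀ k : Fin p, D i k * E k j
          = (if j = k then D i j else 0) + (if jp = k then -(D i k) else 0) := by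
        intro k
        by_cases h1 : k = j
        · subst h1
          have h3 : ¬ jp = k := by
            intro h; apply hj
            have := congrArg Fin.val h
            simp [hjp] at this
            omega
          simp [hEdef, h3]
        · by_cases h2 : (k : ℕ) + 1 = (j : ℕ)
          · have h3 : jp = k := by
              apply Fin.ext; simp [hjp]; omega
            have h4 : ¬ j = k := fun h => h1 h.symm
            simp [hEdef, h1, h2, h3, h4]
          · have h3 : ¬ jp = k := by
              intro h
              have := congrArg Fin.val h
              simp [hjp] at this
              omega
            have h4 : ¬ j = k := fun h => h1 h.symm
            simp [hEdef, h1, h2, h3, h4]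
      rw [Finset.sum_congr rfl (fun k _ => step k), Finset.sum_add_distrib,
        Finset.sum_ite_eq, Finset.sum_ite_eq]
      simp [sub_eq_add_neg]
  rw [hDE, Matrix.det_mul, hdetE, mul_one]















lemma wda_box_integral {p : ℕ} (m : ℕ) (y : Fin p → ℝ) (hy0 : ∀ i, 0 < y i) (hy : StrictMono y) :
    ∫ x in Set.pi Set.univ (fun j => Set.Icc (wdaLo y j) (y j)),
        ((∏ i : Fin p, ∏ j ∈ Finset.Ioi i, (x j - x i)) * ∏ i : Fin p, x i ^ m)
      = (∏ i : Fin p, (((i : ℕ) : ℝ) + m + 1)⁻¹)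
        * ((∏ i : Fin p, ∏ j ∈ Finset.Ioi i, (y j - y i)) * ∏ i : Fin p, y i ^ (m + 1)) := by
  have hab : ∀ j, wdaLo y j ≤ y j := by
    intro j
    unfold wdaLo
    split
    · exact (hy0 j).le
    · exact (hy (by rw [Fin.lt_def]; simp; omega)).le
  have hcomp : IsCompact (Set.pi Set.univ (fun j => Set.Icc (wdaLo y j) (y j))) :=
    isCompact_univ_pi fun j => isCompact_Icc
  -- the matrix of one-variable integrals
  set B : Matrix (Fin p) (Fin p) ℝ := Matrix.of fun i j =>
      ((((i : ℕ) : ℝ) + m + 1)⁻¹) * (y j ^ ((i : ℕ) + m + 1) - wdaLo y j ^ ((i : ℕ) + m + 1))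
    with hBdef
  have step1 : ∫ x in Set.pi Set.univ (fun j => Set.Icc (wdaLo y j) (y j)),
      ((∏ i : Fin p, ∏ j ∈ Finset.Ioi i, (x j - x i)) * ∏ i : Fin p, x i ^ m) = B.det := by
    have h1 : ∀ x : Fin p → ℝ,
        (∏ i : Fin p, ∏ j ∈ Finset.Ioi i, (x j - x i)) * ∏ i : Fin p, x i ^ m
          = ∑ σ : Equiv.Perm (Fin p),
              ((Equiv.Perm.sign σ : ℤ) : ℝ) * ∏ i : Fin p, x (σ i) ^ ((i : ℕ) + m) := by
      intro x
      rw [← wda_det_x x, Matrix.det_apply']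
      simp only [Matrix.of_apply]
    simp_rw [h1]
    rw [integral_finset_sum]
    · have h2 : ∀ σ : Equiv.Perm (Fin p),
          (∫ x in Set.pi Set.univ (fun j => Set.Icc (wdaLo y j) (y j)),
            ((Equiv.Perm.sign σ : ℤ) : ℝ) * ∏ i : Fin p, x (σ i) ^ ((i : ℕ) + m))
          = ((Equiv.Perm.sign σ : ℤ) : ℝ) * ∏ j : Fin p, B (σ.symm j) j := by
        intro σ
        rw [integral_const_mul]
        congr 1
        have h3 : ∀ x : Fin p → ℝ, (∏ i : Fin p, x (σ i) ^ ((i : ℕ) + m))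
            = ∏ j : Fin p, x j ^ (((σ.symm j : Fin p) : ℕ) + m) := by
          intro x
          rw [← Equiv.prod_comp σ (fun j => x j ^ (((σ.symm j : Fin p) : ℕ) + m))]
          exact Finset.prod_congr rfl fun i _ => by simp
        simp_rw [h3]
        rw [wda_box_monomial _ _ hab (fun j => ((σ.symm j : Fin p) : ℕ) + m)]
        refine Finset.prod_congr rfl fun j _ => ?_
        rw [hBdef]
        simp only [Matrix.of_apply]
        rw [inv_mul_eq_div]
        push_cast
        ring_nf
      rw [Finset.sum_congr rfl fun σ _ => h2 σ]
      rw [Matrix.det_apply']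
      refine Fintype.sum_equiv (Equiv.inv (Equiv.Perm (Fin p))) _ _ fun σ => ?_
      show _ = ((Equiv.Perm.sign (σ⁻¹) : ℤ) : ℝ) * ∏ i : Fin p, B ((σ⁻¹ : Equiv.Perm (Fin p)) i) i
      rw [Equiv.Perm.sign_inv]
      rfl
    · intro σ _
      refine (Continuous.continuousOn ?_).integrableOn_compact hcomp
      exact continuous_const.mul (continuous_finset_prod _ fun i _ =>
        (continuous_apply (σ i)).pow _)
  rw [step1]
  -- now compute det B
  set D : Matrix (Fin p) (Fin p) ℝ := Matrix.of fun i j : Fin p => y j ^ ((i : ℕ) + m + 1)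
    with hDdef
  have hB : B = Matrix.of fun (i j : Fin p) => ((((i : ℕ) : ℝ) + m + 1)⁻¹) *
      (D i j - (if _h : (j : ℕ) = 0 then 0
            else D i ⟨(j : ℕ) - 1, lt_of_le_of_lt (Nat.pred_le _) j.2⟩)) := by
    ext i j
    rw [hBdef, hDdef]
    simp only [Matrix.of_apply]
    congr 1
    unfold wdaLo
    split
    · rw [zero_pow (by omega), sub_zero]
    · rfl
  rw [hB]
  refine (Matrix.det_mul_column _ _).trans ?_
  rw [wda_det_telescope D, hDdef, wda_det_y]







lemma wda_fact_prod (m : ℕ) : ∀ p : ℕ,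
    (m.factorial : ℕ) * ∏ i ∈ Finset.range p, (m + 1 + i) = (m + p).factorial
  | 0 => by simp
  | (q + 1) => by
    rw [Finset.prod_range_succ, ← mul_assoc, wda_fact_prod m q, ← Nat.add_assoc,
      Nat.factorial_succ, mul_comm]
    ring

theorem weighted_dixon_anderson_integral (n p : ℕ) (hp : 1 ≤ p) (hnp : p < n)
    (y : Fin p → ℝ) (hy0 : ∀ i, 0 < y i) (hy : StrictMono y) :
    (∫ x in {x : Fin p → ℝ |
          0 ≤ x ⟨0, hp⟩ ∧ (∀ i : Fin p, x i ≤ y i) ∧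
          ∀ (i : Fin p) (h : (i : ℕ) + 1 < p), y i ≤ x ⟨(i : ℕ) + 1, h⟩},
        ((∏ i : Fin p, ∏ j ∈ Finset.Ioi i, (x j - x i)) * ∏ i : Fin p, x i ^ (n - 1 - p))
          / ((∏ i : Fin p, ∏ j ∈ Finset.Ioi i, (y j - y i)) * ∏ i : Fin p, y i ^ (n - p)))
      = (Nat.factorial (n - p - 1) : ℝ) / (Nat.factorial (n - 1) : ℝ) := by
  set m := n - 1 - p with hm
  have hm1 : n - p = m + 1 := by omega
  have hm2 : n - p - 1 = m := by omega
  have hm3 : n - 1 = m + p := by omega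
  -- the region is a box
  have hSeq : {x : Fin p → ℝ |
        0 ≤ x ⟨0, hp⟩ ∧ (∀ i : Fin p, x i ≤ y i) ∧
        ∀ (i : Fin p) (h : (i : ℕ) + 1 < p), y i ≤ x ⟨(i : ℕ) + 1, h⟩}
      = Set.pi Set.univ (fun j => Set.Icc (wdaLo y j) (y j)) := by
    ext x
    simp only [Set.mem_setOf_eq, Set.mem_pi, Set.mem_univ, forall_true_left, Set.mem_Icc]
    constructor
    · rintro ⟨h0, h1, h2⟩ j
      refine ⟨?_, h1 j⟩
      unfold wdaLo
      split
      · next hj =>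
        have h6 : (⟨0, hp⟩ : Fin p) = j := Fin.ext (by simp [hj])
        rw [← h6]; exact h0
      · next hj =>
        have h4 := h2 ⟨(j : ℕ) - 1, lt_of_le_of_lt (Nat.pred_le _) j.2⟩ (by simp; omega)
        exact h4.trans_eq (congrArg x (Fin.ext (by show (j : ℕ) - 1 + 1 = j; omega)))
    · intro h
      refine ⟨?_, fun i => (h i).2, ?_⟩
      · have h4 := (h ⟨0, hp⟩).1
        unfold wdaLo at h4
        rw [dif_pos rfl] at h4
        exact h4
      · intro i hi
        have h4 := (h ⟨(i : ℕ) + 1, hi⟩).1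
        unfold wdaLo at h4
        rw [dif_neg (by simp)] at h4
        exact (congrArg y (Fin.ext (by show (i : ℕ) = (i : ℕ) + 1 - 1; omega))).trans_le h4
  rw [hSeq, integral_div, hm, wda_box_integral (n - 1 - p) y hy0 hy, ← hm, ← hm1]
  -- cancel the Vandermonde and power factors
  have hvdm : (∏ i : Fin p, ∏ j ∈ Finset.Ioi i, (y j - y i)) > 0 := by
    refine Finset.prod_pos fun i _ => Finset.prod_pos fun j hj => ?_
    rw [Finset.mem_Ioi] at hj
    exact sub_pos.2 (hy hj)
  have hpow : (∏ i : Fin p, y i ^ (n - p)) > 0 :=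
    Finset.prod_pos fun i _ => pow_pos (hy0 i) _
  rw [mul_div_assoc, div_self (ne_of_gt (mul_pos hvdm hpow)), mul_one]
  -- compute the constant
  have hfact := wda_fact_prod m p
  have hprod : (∏ i : Fin p, (((i : ℕ) : ℝ) + m + 1))
      = ∏ i ∈ Finset.range p, ((m + 1 + i : ℕ) : ℝ) := by
    rw [Finset.prod_range fun i => ((m + 1 + i : ℕ) : ℝ)]
    refine Finset.prod_congr rfl fun i _ => ?_
    push_cast
    ring
  have hne : (∏ i : Fin p, (((i : ℕ) : ℝ) + m + 1)) ≠ 0 := by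
    refine Finset.prod_ne_zero_iff.2 fun i _ => ?_
    positivity
  have hprodinv : (∏ i : Fin p, (((i : ℕ) : ℝ) + m + 1)⁻¹)
      = (m.factorial : ℝ) / ((m + p).factorial : ℝ) := by
    rw [Finset.prod_inv_distrib, inv_eq_one_div,
      div_eq_div_iff hne (by positivity), one_mul, hprod, ← Nat.cast_prod, ← Nat.cast_mul]
    exact_mod_cast hfact.symm
  rw [hprodinv, hm2, hm3]
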